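/- Under hypotheses (γ), (φ_hyp), and (F3), and with F continuous in (x₁,x₂), fix δ ∈ (0,1) as in (F3). Then there exist r₀ ∈ (0,1) and ε > 0 such that for every u = (u₁,u₂) ∈ E with ‖u₁‖_∞ + ‖u₂‖_∞ = δ, the functional φ(u) = ∑_{t=1}^T [ γ₁(t)Φ₁(Δu₁(t)) + γ₂(t)Φ₂(Δu₂(t)) + γ₃(t)Φ₃(u₁(t)) + γ₄(t)Φ₄(u₂(t)) − F(t,u₁(t),u₂(t)) ] satisfies φ(r₀u) ≤ −ε. -/

import Mathlib

/- STATEMENT 15: under (γ), (φ_hyp), (F3) with `δ ∈ (0,1)` as in (F3) and `F` continuous,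
there exist `r₀ ∈ (0,1)` and `ε > 0` such that `φ(r₀u) ≤ −ε` for every `u ∈ E`
with `‖u₁‖_∞ + ‖u₂‖_∞ = δ`. -/

noncomputable section

abbrev Rn (N : ℕ) := EuclideanSpace ℝ (Fin N)

/-- `u : ℤ → ℝ^N` is `T`-periodic. -/
def IsPeriodic (N : ℕ) (T : ℕ) (u : ℤ → Rn N) : Prop := ∀ t : ℤ, u (t + T) = u t

/-- Forward difference. -/
def fdiff (N : ℕ) (u : ℤ → Rn N) (t : ℤ) : Rn N := u (t + 1) - u t

/-- `‖w‖_∞ = max_{t∈ℤ[1,T]} |w(t)|` (for `T ≥ 1`). -/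
def supNorm (N T : ℕ) (hT : 1 ≤ T) (w : ℤ → Rn N) : ℝ :=
  (Finset.Icc (1 : ℤ) (T : ℤ)).sup'
    (Finset.nonempty_Icc.mpr (by exact_mod_cast hT)) (fun t => ‖w t‖)

/-- The action functional of Theorem 1.2. -/
def phiFun (N T : ℕ) (γ : Fin 4 → ℤ → ℝ) (Φv : Fin 4 → Rn N → ℝ)
    (F : ℤ → Rn N → Rn N → ℝ) (u : (ℤ → Rn N) × (ℤ → Rn N)) : ℝ :=
  ∑ t ∈ Finset.Icc (1 : ℤ) (T : ℤ),
    (γ 0 t * Φv 0 (fdiff N u.1 t) + γ 1 t * Φv 1 (fdiff N u.2 t)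
      + γ 2 t * Φv 2 (u.1 t) + γ 3 t * Φv 3 (u.2 t) - F t (u.1 t) (u.2 t))

set_option maxHeartbeats 1000000 in
theorem phi_negative_on_small_sphere (T N : ℕ) (hT : 1 < T)
    (γ : Fin 4 → ℤ → ℝ) (φv : Fin 4 → Rn N → Rn N) (Φv : Fin 4 → Rn N → ℝ)
    (F : ℤ → Rn N → Rn N → ℝ)
    (p q : ℝ) (a b : Fin 4 → ℝ)
    (hp : 1 < p) (hq : 1 < q) (ha : ∀ i, 0 < a i) (hb : ∀ i, 0 < b i)
    -- hypothesis (γ)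
    (hγper : ∀ i, ∀ t : ℤ, γ i (t + T) = γ i t)
    (hγpos : ∀ i, ∀ t ∈ Finset.Icc (1 : ℤ) (T : ℤ), 0 < γ i t)
    -- hypothesis (φ_hyp)
    (hφgrad : ∀ i, ∀ x : Rn N, φv i x = gradient (Φv i) x)
    (hΦnonneg : ∀ i, ∀ x : Rn N, 0 ≤ Φv i x)
    (hΦq : ∀ i ∈ ({0, 2} : Set (Fin 4)), ∀ x : Rn N,
      a i * ‖x‖ ^ q ≤ Φv i x ∧ Φv i x ≤ b i * ‖x‖ ^ q)
    (hΦp : ∀ i ∈ ({1, 3} : Set (Fin 4)), ∀ x : Rn N,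
      a i * ‖x‖ ^ p ≤ Φv i x ∧ Φv i x ≤ b i * ‖x‖ ^ p)
    -- `F` continuous in `(x₁,x₂)`
    (hFcont : ∀ t : ℤ, Continuous (fun pt : Rn N × Rn N => F t pt.1 pt.2))
    -- hypothesis (F3)
    (β₁ β₂ M₁ M₂ δ : ℝ)
    (hβ₁ : 1 < β₁ ∧ β₁ < min q p) (hβ₂ : 1 < β₂ ∧ β₂ < min q p)
    (hM₁ : 0 < M₁) (hM₂ : 0 < M₂) (hδ : 0 < δ ∧ δ < 1)
    (hF3 : ∀ t ∈ Finset.Icc (1 : ℤ) (T : ℤ), ∀ x₁ x₂ : Rn N,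
      ‖x₁‖ < δ → ‖x₂‖ < δ →
        M₁ * ‖x₁‖ ^ β₁ + M₂ * ‖x₂‖ ^ β₂ ≤ F t x₁ x₂) :
    ∃ r₀ : ℝ, 0 < r₀ ∧ r₀ < 1 ∧ ∃ ε : ℝ, 0 < ε ∧
      ∀ u : (ℤ → Rn N) × (ℤ → Rn N), IsPeriodic N T u.1 → IsPeriodic N T u.2 →
        supNorm N T hT.le u.1 + supNorm N T hT.le u.2 = δ →
          phiFun N T γ Φv F (r₀ • u) ≤ -ε := by
  classical
  obtain ⟨hδ0, hδ1⟩ := hδ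
  set S : Finset ℤ := Finset.Icc (1 : ℤ) (T : ℤ) with hSdef
  have hS : S.Nonempty := Finset.nonempty_Icc.mpr (by exact_mod_cast hT.le)
  have h1S : (1 : ℤ) ∈ S := by
    simp only [hSdef, Finset.mem_Icc]
    exact ⟨le_refl 1, by exact_mod_cast hT.le⟩
  have hcard : (S.card : ℝ) = (T : ℝ) := by
    simp [hSdef, Int.card_Icc]
  -- constants
  set G : Fin 4 → ℝ := fun i => S.sup' hS (γ i) with hGdef
  have hGle : ∀ i, ∀ t ∈ S, γ i t ≤ G i := fun i t ht => Finset.le_sup' (γ i) ht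
  have hGpos : ∀ i, 0 < G i := fun i => lt_of_lt_of_le (hγpos i 1 h1S) (hGle i 1 h1S)
  set m : ℝ := min q p with hmdef
  have hm1 : 1 < m := lt_min hq hp
  set β : ℝ := max β₁ β₂ with hβdef
  have hβm : β < m := max_lt hβ₁.2 hβ₂.2
  set Csum : ℝ := G 0 * b 0 * (2:ℝ) ^ q + G 1 * b 1 * (2:ℝ) ^ p + G 2 * b 2 + G 3 * b 3
    with hCdef
  have hCpos : 0 < Csum := by
    have h2q : (0:ℝ) < (2:ℝ) ^ q := Real.rpow_pos_of_pos (by norm_num) q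
    have h2p : (0:ℝ) < (2:ℝ) ^ p := Real.rpow_pos_of_pos (by norm_num) p
    have := hGpos 0; have := hGpos 1; have := hGpos 2; have := hGpos 3
    have := hb 0; have := hb 1; have := hb 2; have := hb 3
    positivity
  set c : ℝ := min (M₁ * (δ / 2) ^ β₁) (M₂ * (δ / 2) ^ β₂) with hcdef
  have hcpos : 0 < c := by
    apply lt_min
    · exact mul_pos hM₁ (Real.rpow_pos_of_pos (by linarith) β₁)
    · exact mul_pos hM₂ (Real.rpow_pos_of_pos (by linarith) β₂)
  have hTpos : (0:ℝ) < (T:ℝ) := by exact_mod_cast Nat.zero_lt_of_lt hT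
  set d : ℝ := m - β with hddef
  have hdpos : 0 < d := by simp only [hddef]; linarith
  set K : ℝ := (c / (2 * ((T:ℝ) * Csum))) ^ d⁻¹ with hKdef
  have hKpos : 0 < K :=
    Real.rpow_pos_of_pos (div_pos hcpos (by positivity)) d⁻¹
  set r₀ : ℝ := min (1/2) K with hr₀def
  have hr₀pos : 0 < r₀ := lt_min (by norm_num) hKpos
  have hr₀lt1 : r₀ < 1 := lt_of_le_of_lt (min_le_left _ _) (by norm_num)
  have hr₀le1 : r₀ ≤ 1 := hr₀lt1.le
  have hr₀d : (T:ℝ) * Csum * r₀ ^ d ≤ c / 2 := by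
    have h1 : r₀ ^ d ≤ K ^ d :=
      Real.rpow_le_rpow hr₀pos.le (min_le_right _ _) hdpos.le
    have h2 : K ^ d = c / (2 * ((T:ℝ) * Csum)) := by
      rw [hKdef]
      exact Real.rpow_inv_rpow (by positivity) hdpos.ne'
    rw [h2] at h1
    have hTC : (0:ℝ) < (T:ℝ) * Csum := by positivity
    calc (T:ℝ) * Csum * r₀ ^ d ≤ (T:ℝ) * Csum * (c / (2 * ((T:ℝ) * Csum))) :=
          mul_le_mul_of_nonneg_left h1 hTC.le
      _ = c / 2 := by field_simp
  have hmain : (T:ℝ) * Csum * r₀ ^ m ≤ c / 2 * r₀ ^ β := by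
    have : r₀ ^ m = r₀ ^ β * r₀ ^ d := by
      rw [← Real.rpow_add hr₀pos]; congr 1; simp [hddef]
    rw [this]
    calc (T:ℝ) * Csum * (r₀ ^ β * r₀ ^ d) = ((T:ℝ) * Csum * r₀ ^ d) * r₀ ^ β := by ring
      _ ≤ c / 2 * r₀ ^ β :=
          mul_le_mul_of_nonneg_right hr₀d (Real.rpow_nonneg hr₀pos.le β)
  refine ⟨r₀, hr₀pos, hr₀lt1, c / 2 * r₀ ^ β, by positivity, ?_⟩
  intro u hu1 hu2 hnorm
  set n1 : ℝ := supNorm N T hT.le u.1 with hn1def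
  set n2 : ℝ := supNorm N T hT.le u.2 with hn2def
  have hle_sup : ∀ w : ℤ → Rn N, ∀ t ∈ S, ‖w t‖ ≤ supNorm N T hT.le w := by
    intro w t ht
    exact Finset.le_sup' (fun s => ‖w s‖) ht
  have hn1nonneg : 0 ≤ n1 := le_trans (norm_nonneg _) (hle_sup u.1 1 h1S)
  have hn2nonneg : 0 ≤ n2 := le_trans (norm_nonneg _) (hle_sup u.2 1 h1S)
  have hn1δ : n1 ≤ δ := by linarith
  have hn2δ : n2 ≤ δ := by linarith
  -- value at t+1 is also bounded by supNorm, via periodicity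
  have hsucc : ∀ (w : ℤ → Rn N), IsPeriodic N T w → ∀ t ∈ S,
      ‖w (t + 1)‖ ≤ supNorm N T hT.le w := by
    intro w hw t ht
    simp only [hSdef, Finset.mem_Icc] at ht
    by_cases htT : t + 1 ≤ (T : ℤ)
    · exact hle_sup w (t + 1) (by simp only [hSdef, Finset.mem_Icc]; omega)
    · have htt : t = (T : ℤ) := by omega
      have : w (t + 1) = w 1 := by
        rw [htt]
        have := hw 1
        rw [← this]
        congr 1
        ring
      rw [this]
      exact hle_sup w 1 h1S
  -- bound on differences
  have hfd : ∀ (w : ℤ → Rn N), IsPeriodic N T w → ∀ t ∈ S,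
      ‖fdiff N w t‖ ≤ 2 * supNorm N T hT.le w := by
    intro w hw t ht
    calc ‖fdiff N w t‖ = ‖w (t+1) - w t‖ := rfl
      _ ≤ ‖w (t+1)‖ + ‖w t‖ := norm_sub_le _ _
      _ ≤ supNorm N T hT.le w + supNorm N T hT.le w := by
          exact add_le_add (hsucc w hw t ht) (hle_sup w t ht)
      _ = 2 * supNorm N T hT.le w := by ring
  -- norm of scaled vectors
  have hns : ∀ x : Rn N, ‖r₀ • x‖ = r₀ * ‖x‖ := by
    intro x
    rw [norm_smul, Real.norm_eq_abs, abs_of_pos hr₀pos]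
  -- key bound for the Φ terms
  have key : ∀ (i : Fin 4) (e cc : ℝ) (t : ℤ) (x : Rn N), t ∈ S → m ≤ e → 0 ≤ cc →
      ‖x‖ ≤ cc * r₀ → (∀ y : Rn N, Φv i y ≤ b i * ‖y‖ ^ e) →
      γ i t * Φv i x ≤ G i * b i * cc ^ e * r₀ ^ m := by
    intro i e cc t x ht hme hcc hx hΦ
    have he0 : 0 ≤ e := by linarith
    have h1 : γ i t * Φv i x ≤ G i * Φv i x :=
      mul_le_mul_of_nonneg_right (hGle i t ht) (hΦnonneg i x)
    have h2 : ‖x‖ ^ e ≤ (cc * r₀) ^ e := Real.rpow_le_rpow (norm_nonneg x) hx he0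
    have h3 : (cc * r₀) ^ e = cc ^ e * r₀ ^ e := Real.mul_rpow hcc hr₀pos.le
    have h4 : r₀ ^ e ≤ r₀ ^ m := Real.rpow_le_rpow_of_exponent_ge hr₀pos hr₀le1 hme
    have hΦx : Φv i x ≤ b i * (cc ^ e * r₀ ^ m) := by
      calc Φv i x ≤ b i * ‖x‖ ^ e := hΦ x
        _ ≤ b i * (cc ^ e * r₀ ^ e) := by
            rw [← h3]; exact mul_le_mul_of_nonneg_left h2 (hb i).le
        _ ≤ b i * (cc ^ e * r₀ ^ m) := by
            have : cc ^ e * r₀ ^ e ≤ cc ^ e * r₀ ^ m :=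
              mul_le_mul_of_nonneg_left h4 (Real.rpow_nonneg hcc e)
            exact mul_le_mul_of_nonneg_left this (hb i).le
    calc γ i t * Φv i x ≤ G i * Φv i x := h1
      _ ≤ G i * (b i * (cc ^ e * r₀ ^ m)) :=
          mul_le_mul_of_nonneg_left hΦx (hGpos i).le
      _ = G i * b i * cc ^ e * r₀ ^ m := by ring
  -- the F-values at scaled argument are ≥ the (F3) lower bound
  have hin : ∀ t ∈ S, ‖r₀ • u.1 t‖ < δ ∧ ‖r₀ • u.2 t‖ < δ := by
    intro t ht
    constructor
    · rw [hns]
      calc r₀ * ‖u.1 t‖ ≤ r₀ * n1 :=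
            mul_le_mul_of_nonneg_left (hle_sup u.1 t ht) hr₀pos.le
        _ ≤ r₀ * δ := mul_le_mul_of_nonneg_left hn1δ hr₀pos.le
        _ < 1 * δ := by
            exact mul_lt_mul_of_pos_right hr₀lt1 hδ0
        _ = δ := one_mul δ
    · rw [hns]
      calc r₀ * ‖u.2 t‖ ≤ r₀ * n2 :=
            mul_le_mul_of_nonneg_left (hle_sup u.2 t ht) hr₀pos.le
        _ ≤ r₀ * δ := mul_le_mul_of_nonneg_left hn2δ hr₀pos.le
        _ < 1 * δ := mul_lt_mul_of_pos_right hr₀lt1 hδ0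
        _ = δ := one_mul δ
  have hFnonneg : ∀ t ∈ S, 0 ≤ F t (r₀ • u.1 t) (r₀ • u.2 t) := by
    intro t ht
    obtain ⟨h1, h2⟩ := hin t ht
    have := hF3 t ht _ _ h1 h2
    have p1 : 0 ≤ M₁ * ‖r₀ • u.1 t‖ ^ β₁ := by positivity
    have p2 : 0 ≤ M₂ * ‖r₀ • u.2 t‖ ^ β₂ := by positivity
    linarith
  -- lower bound for the F-sum
  have hFsum : c * r₀ ^ β ≤ ∑ t ∈ S, F t (r₀ • u.1 t) (r₀ • u.2 t) := by
    have hrβ : 0 < r₀ ^ β := Real.rpow_pos_of_pos hr₀pos β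
    -- a single big term
    have hbig : ∃ t₀ ∈ S, c * r₀ ^ β ≤ F t₀ (r₀ • u.1 t₀) (r₀ • u.2 t₀) := by
      have hcase : δ / 2 ≤ n1 ∨ δ / 2 ≤ n2 := by
        by_contra h
        push_neg at h
        linarith [h.1, h.2]
      rcases hcase with hcase | hcase
      · obtain ⟨t₀, ht₀, hval⟩ := Finset.exists_mem_eq_sup' hS (fun t => ‖u.1 t‖)
        refine ⟨t₀, ht₀, ?_⟩
        have hval' : ‖u.1 t₀‖ = n1 := hval.symm
        obtain ⟨hin1, hin2⟩ := hin t₀ ht₀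
        have hF := hF3 t₀ ht₀ _ _ hin1 hin2
        have hlow : c * r₀ ^ β ≤ M₁ * ‖r₀ • u.1 t₀‖ ^ β₁ := by
          have h1 : r₀ * (δ / 2) ≤ ‖r₀ • u.1 t₀‖ := by
            rw [hns, hval']
            exact mul_le_mul_of_nonneg_left hcase hr₀pos.le
          have h2 : (r₀ * (δ / 2)) ^ β₁ ≤ ‖r₀ • u.1 t₀‖ ^ β₁ :=
            Real.rpow_le_rpow (by positivity) h1 (by linarith [hβ₁.1])
          have h3 : (r₀ * (δ / 2)) ^ β₁ = r₀ ^ β₁ * (δ / 2) ^ β₁ :=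
            Real.mul_rpow hr₀pos.le (by linarith)
          have h4 : r₀ ^ β ≤ r₀ ^ β₁ :=
            Real.rpow_le_rpow_of_exponent_ge hr₀pos hr₀le1 (le_max_left _ _)
          have h5 : c ≤ M₁ * (δ / 2) ^ β₁ := min_le_left _ _
          calc c * r₀ ^ β ≤ M₁ * (δ / 2) ^ β₁ * r₀ ^ β₁ := by
                apply mul_le_mul h5 h4 hrβ.le
                positivity
            _ = M₁ * ((r₀ * (δ / 2)) ^ β₁) := by rw [h3]; ring
            _ ≤ M₁ * ‖r₀ • u.1 t₀‖ ^ β₁ :=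
                mul_le_mul_of_nonneg_left h2 hM₁.le
        have p2 : 0 ≤ M₂ * ‖r₀ • u.2 t₀‖ ^ β₂ := by positivity
        linarith
      · obtain ⟨t₀, ht₀, hval⟩ := Finset.exists_mem_eq_sup' hS (fun t => ‖u.2 t‖)
        refine ⟨t₀, ht₀, ?_⟩
        have hval' : ‖u.2 t₀‖ = n2 := hval.symm
        obtain ⟨hin1, hin2⟩ := hin t₀ ht₀
        have hF := hF3 t₀ ht₀ _ _ hin1 hin2
        have hlow : c * r₀ ^ β ≤ M₂ * ‖r₀ • u.2 t₀‖ ^ β₂ := by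
          have h1 : r₀ * (δ / 2) ≤ ‖r₀ • u.2 t₀‖ := by
            rw [hns, hval']
            exact mul_le_mul_of_nonneg_left hcase hr₀pos.le
          have h2 : (r₀ * (δ / 2)) ^ β₂ ≤ ‖r₀ • u.2 t₀‖ ^ β₂ :=
            Real.rpow_le_rpow (by positivity) h1 (by linarith [hβ₂.1])
          have h3 : (r₀ * (δ / 2)) ^ β₂ = r₀ ^ β₂ * (δ / 2) ^ β₂ :=
            Real.mul_rpow hr₀pos.le (by linarith)
          have h4 : r₀ ^ β ≤ r₀ ^ β₂ :=
            Real.rpow_le_rpow_of_exponent_ge hr₀pos hr₀le1 (le_max_right _ _)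
          have h5 : c ≤ M₂ * (δ / 2) ^ β₂ := min_le_right _ _
          calc c * r₀ ^ β ≤ M₂ * (δ / 2) ^ β₂ * r₀ ^ β₂ := by
                apply mul_le_mul h5 h4 hrβ.le
                positivity
            _ = M₂ * ((r₀ * (δ / 2)) ^ β₂) := by rw [h3]; ring
            _ ≤ M₂ * ‖r₀ • u.2 t₀‖ ^ β₂ :=
                mul_le_mul_of_nonneg_left h2 hM₂.le
        have p1 : 0 ≤ M₁ * ‖r₀ • u.1 t₀‖ ^ β₁ := by positivity
        linarith
    obtain ⟨t₀, ht₀, hbig⟩ := hbig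
    calc c * r₀ ^ β ≤ F t₀ (r₀ • u.1 t₀) (r₀ • u.2 t₀) := hbig
      _ ≤ ∑ t ∈ S, F t (r₀ • u.1 t) (r₀ • u.2 t) :=
          Finset.single_le_sum hFnonneg ht₀
  -- rewrite the functional at the scaled point
  have hφeq : phiFun N T γ Φv F (r₀ • u) =
      ∑ t ∈ S, (γ 0 t * Φv 0 (r₀ • fdiff N u.1 t) + γ 1 t * Φv 1 (r₀ • fdiff N u.2 t)
        + γ 2 t * Φv 2 (r₀ • u.1 t) + γ 3 t * Φv 3 (r₀ • u.2 t)
        - F t (r₀ • u.1 t) (r₀ • u.2 t)) := by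
    unfold phiFun
    apply Finset.sum_congr rfl
    intro t ht
    have hfd1 : fdiff N (r₀ • u).1 t = r₀ • fdiff N u.1 t := by
      simp [fdiff, smul_sub]
    have hfd2 : fdiff N (r₀ • u).2 t = r₀ • fdiff N u.2 t := by
      simp [fdiff, smul_sub]
    rw [hfd1, hfd2]
    simp
  -- per-summand upper bound
  have hsummand : ∀ t ∈ S,
      γ 0 t * Φv 0 (r₀ • fdiff N u.1 t) + γ 1 t * Φv 1 (r₀ • fdiff N u.2 t)
        + γ 2 t * Φv 2 (r₀ • u.1 t) + γ 3 t * Φv 3 (r₀ • u.2 t)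
        - F t (r₀ • u.1 t) (r₀ • u.2 t)
      ≤ Csum * r₀ ^ m - F t (r₀ • u.1 t) (r₀ • u.2 t) := by
    intro t ht
    have hb0 : γ 0 t * Φv 0 (r₀ • fdiff N u.1 t) ≤ G 0 * b 0 * (2:ℝ) ^ q * r₀ ^ m := by
      apply key 0 q 2 t _ ht (min_le_left q p) (by norm_num)
      · rw [hns]
        calc r₀ * ‖fdiff N u.1 t‖ ≤ r₀ * (2 * n1) :=
              mul_le_mul_of_nonneg_left (hfd u.1 hu1 t ht) hr₀pos.le
          _ ≤ r₀ * (2 * 1) := by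
              apply mul_le_mul_of_nonneg_left _ hr₀pos.le
              have : n1 ≤ 1 := by linarith
              linarith
          _ = 2 * r₀ := by ring
      · intro y; exact (hΦq 0 (by simp) y).2
    have hb1 : γ 1 t * Φv 1 (r₀ • fdiff N u.2 t) ≤ G 1 * b 1 * (2:ℝ) ^ p * r₀ ^ m := by
      apply key 1 p 2 t _ ht (min_le_right q p) (by norm_num)
      · rw [hns]
        calc r₀ * ‖fdiff N u.2 t‖ ≤ r₀ * (2 * n2) :=
              mul_le_mul_of_nonneg_left (hfd u.2 hu2 t ht) hr₀pos.le
          _ ≤ r₀ * (2 * 1) := by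
              apply mul_le_mul_of_nonneg_left _ hr₀pos.le
              have : n2 ≤ 1 := by linarith
              linarith
          _ = 2 * r₀ := by ring
      · intro y; exact (hΦp 1 (by simp) y).2
    have hb2 : γ 2 t * Φv 2 (r₀ • u.1 t) ≤ G 2 * b 2 * (1:ℝ) ^ q * r₀ ^ m := by
      apply key 2 q 1 t _ ht (min_le_left q p) (by norm_num)
      · rw [hns]
        have h1 : ‖u.1 t‖ ≤ 1 := le_trans (hle_sup u.1 t ht) (by linarith)
        calc r₀ * ‖u.1 t‖ ≤ r₀ * 1 := mul_le_mul_of_nonneg_left h1 hr₀pos.le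
          _ = 1 * r₀ := by ring
      · intro y; exact (hΦq 2 (by simp) y).2
    have hb3 : γ 3 t * Φv 3 (r₀ • u.2 t) ≤ G 3 * b 3 * (1:ℝ) ^ p * r₀ ^ m := by
      apply key 3 p 1 t _ ht (min_le_right q p) (by norm_num)
      · rw [hns]
        have h1 : ‖u.2 t‖ ≤ 1 := le_trans (hle_sup u.2 t ht) (by linarith)
        calc r₀ * ‖u.2 t‖ ≤ r₀ * 1 := mul_le_mul_of_nonneg_left h1 hr₀pos.le
          _ = 1 * r₀ := by ring
      · intro y; exact (hΦp 3 (by simp) y).2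
    rw [Real.one_rpow] at hb2 hb3
    have hCs : G 0 * b 0 * (2:ℝ) ^ q * r₀ ^ m + G 1 * b 1 * (2:ℝ) ^ p * r₀ ^ m
        + G 2 * b 2 * r₀ ^ m + G 3 * b 3 * r₀ ^ m = Csum * r₀ ^ m := by
      rw [hCdef]; ring
    linarith
  -- put things together
  calc phiFun N T γ Φv F (r₀ • u)
      = ∑ t ∈ S, (γ 0 t * Φv 0 (r₀ • fdiff N u.1 t) + γ 1 t * Φv 1 (r₀ • fdiff N u.2 t)
        + γ 2 t * Φv 2 (r₀ • u.1 t) + γ 3 t * Φv 3 (r₀ • u.2 t)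
        - F t (r₀ • u.1 t) (r₀ • u.2 t)) := hφeq
    _ ≤ ∑ t ∈ S, (Csum * r₀ ^ m - F t (r₀ • u.1 t) (r₀ • u.2 t)) :=
        Finset.sum_le_sum hsummand
    _ = (T:ℝ) * (Csum * r₀ ^ m) - ∑ t ∈ S, F t (r₀ • u.1 t) (r₀ • u.2 t) := by
        rw [Finset.sum_sub_distrib, Finset.sum_const, nsmul_eq_mul, hcard]
    _ ≤ (T:ℝ) * (Csum * r₀ ^ m) - c * r₀ ^ β := by linarith
    _ ≤ c / 2 * r₀ ^ β - c * r₀ ^ β := by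
        have := hmain
        linarith [hmain]
    _ = -(c / 2 * r₀ ^ β) := by ring
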